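/- Let E be a real Banach space, 𝓚 ⊆ E nonempty closed convex, and U ⊆ 𝓚 bounded and relatively open in 𝓚, with ∂U its boundary in 𝓚. Let A be a linear operator with domain D(A) ⊆ E, h > 0, and J : E → E a compact continuous linear operator such that Jx ∈ D(A) and Jx − h•A(Jx) = x for all x ∈ E, and J(y − h•Ay) = y for all y ∈ D(A). Let G : 𝓚 → (nonempty subsets of E) be Hausdorff upper semicontinuous with convex weakly compact values, mapping bounded sets onto bounded sets. If Ax + y ≠ 0 for every x ∈ D(A) ∩ ∂U and every y ∈ G(x), then there exists α₀ > 0 such that for every x ∈ D(A) ∩ ∂U, every x' ∈ 𝓚 with ‖x' − x‖ < α₀, every y ∈ G(x') and every ξ ∈ E with ‖ξ‖ < α₀, one has Ax + y + ξ ≠ 0. -/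
import Mathlib


open Metric Set

private theorem weak_t2 {E : Type*} [NormedAddCommGroup E] [NormedSpace ℝ E] :
    T2Space (WeakSpace ℝ E) := by
  constructor
  intro x y hxy
  obtain ⟨f, hf⟩ := SeparatingDual.exists_separating_of_ne (R := ℝ) (V := E) hxy
  exact separated_by_continuous (WeakBilin.eval_continuous _ f) hf

private theorem isClosed_of_weak_compact {E : Type*} [NormedAddCommGroup E] [NormedSpace ℝ E]
    {S : Set E} (hS : IsCompact ((toWeakSpace ℝ E) '' S)) : IsClosed S := by
  have : T2Space (WeakSpace ℝ E) := weak_t2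
  have h1 : IsClosed ((toWeakSpace ℝ E) '' S) := hS.isClosed
  have h2 := h1.preimage (toWeakSpaceCLM ℝ E).continuous
  have h3 : (toWeakSpaceCLM ℝ E) ⁻¹' ((toWeakSpace ℝ E) '' S) = S :=
    Set.preimage_image_eq S (toWeakSpace ℝ E).injective
  rwa [h3] at h2

/-- Let `𝓚 ⊆ E` be nonempty closed convex, `U ⊆ 𝓚` bounded and relatively
open in `𝓚` with relative boundary `∂U = (cl U ∩ 𝓚) \ U`.  Let `A` be a partially defined
linear operator with compact resolvent `J = (I - hA)⁻¹`, and let `G` be an H-usc map with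
convex weakly compact values mapping bounded sets to bounded sets.  If `Ax + y ≠ 0` for all
`x ∈ D(A) ∩ ∂U`, `y ∈ G(x)`, then there is `α₀ > 0` such that `Ax + y + ξ ≠ 0` whenever
`x ∈ D(A) ∩ ∂U`, `x' ∈ 𝓚`, `‖x' - x‖ < α₀`, `y ∈ G(x')` and `‖ξ‖ < α₀`. -/
theorem no_zeros_near_boundary
    {E : Type*} [NormedAddCommGroup E] [NormedSpace ℝ E] [CompleteSpace E]
    [MeasurableSpace E] [BorelSpace E]
    (𝓚 : Set E) (hne : 𝓚.Nonempty) (hcl : IsClosed 𝓚) (hconv : Convex ℝ 𝓚)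
    (U : Set E) (hU𝓚 : U ⊆ 𝓚) (hUbdd : Bornology.IsBounded U)
    (hUopen : ∃ V : Set E, IsOpen V ∧ U = V ∩ 𝓚)
    -- the resolvent J = (I - h A)⁻¹, a compact operator
    (A : E →ₗ.[ℝ] E) (h : ℝ) (hh : 0 < h)
    (J : E →L[ℝ] E) (hJcomp : IsCompactOperator J)
    (hJ1 : ∀ x : E, ∃ hx : J x ∈ A.domain, J x - h • A ⟨J x, hx⟩ = x)
    (hJ2 : ∀ y : A.domain, J ((y : E) - h • A y) = (y : E))
    -- the multivalued map G
    (G : E → Set E)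
    (hGne : ∀ x ∈ 𝓚, (G x).Nonempty)
    (hGusc : ∀ x₀ ∈ 𝓚, ∀ ε > (0:ℝ), ∃ δ > (0:ℝ), ∀ x ∈ 𝓚, ‖x - x₀‖ < δ →
      G x ⊆ {y : E | Metric.infDist y (G x₀) < ε})
    (hGconv : ∀ x ∈ 𝓚, Convex ℝ (G x))
    (hGweakcpt : ∀ x ∈ 𝓚, IsCompact ((toWeakSpace ℝ E) '' (G x)))
    (hGbdd : ∀ B : Set E, B ⊆ 𝓚 → Bornology.IsBounded B →
      Bornology.IsBounded (⋃ x ∈ B, G x))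
    -- no zeros of A + G on the relative boundary of U in 𝓚
    (hne0 : ∀ x, ∀ hx : x ∈ A.domain, x ∈ (closure U ∩ 𝓚) \ U →
      ∀ y ∈ G x, A ⟨x, hx⟩ + y ≠ 0) :
    ∃ α₀ > (0:ℝ), ∀ x, ∀ hx : x ∈ A.domain, x ∈ (closure U ∩ 𝓚) \ U →
      ∀ x' ∈ 𝓚, ‖x' - x‖ < α₀ → ∀ y ∈ G x', ∀ ξ : E, ‖ξ‖ < α₀ →
        A ⟨x, hx⟩ + y + ξ ≠ 0 := by
  by_contra hcon
  push_neg at hcon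
  have hseq : ∀ n : ℕ, ∃ (x : E) (hx : x ∈ A.domain), x ∈ (closure U ∩ 𝓚) \ U ∧
      ∃ x' ∈ 𝓚, ‖x' - x‖ < 1/((n:ℝ)+1) ∧ ∃ y ∈ G x', ∃ ξ : E, ‖ξ‖ < 1/((n:ℝ)+1) ∧
      A ⟨x, hx⟩ + y + ξ = 0 := by
    intro n
    have hpos : (0:ℝ) < 1/((n:ℝ)+1) := by positivity
    obtain ⟨x, hx, hbd, x', hx'K, hnorm, y, hy, ξ, hξ, heq⟩ := hcon _ hpos
    exact ⟨x, hx, hbd, x', hx'K, hnorm, y, hy, ξ, hξ, heq⟩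
  choose x hx hbd x' hx'K hxx' y hyG ξ hξ heq using hseq
  -- basic limit for 1/(n+1)
  have hton : Filter.Tendsto (fun n : ℕ => 1/((n:ℝ)+1)) Filter.atTop (nhds 0) :=
    tendsto_one_div_add_atTop_nhds_zero_nat
  -- the relative boundary is closed
  obtain ⟨V, hVopen, hUV⟩ := hUopen
  have hDcl : IsClosed ((closure U ∩ 𝓚) \ U) := by
    have hEq : (closure U ∩ 𝓚) \ U = (closure U ∩ 𝓚) ∩ Vᶜ := by
      ext p
      simp only [hUV, mem_diff, mem_inter_iff, mem_compl_iff]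
      tauto
    rw [hEq]
    exact (isClosed_closure.inter hcl).inter hVopen.isClosed_compl
  -- key identity from the resolvent
  have ha : ∀ n, A ⟨x n, hx n⟩ = -(y n + ξ n) := by
    intro n
    have := heq n
    rw [add_assoc] at this
    exact eq_neg_of_add_eq_zero_left this
  have keyJ : ∀ n, J (x n + h • (y n + ξ n)) = x n := by
    intro n
    have h2 := hJ2 ⟨x n, hx n⟩
    rw [ha n, smul_neg, sub_neg_eq_add] at h2
    exact h2
  have key : ∀ n, x n = J (x n) + h • J (y n) + h • J (ξ n) := by
    intro n
    conv_lhs => rw [← keyJ n]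
    simp [map_add, map_smul, smul_add, add_assoc]
  -- bounds
  have hone : ∀ n : ℕ, 1/((n:ℝ)+1) ≤ 1 := by
    intro n
    rw [div_le_one (by positivity)]
    have : (0:ℝ) ≤ (n:ℝ) := Nat.cast_nonneg n
    linarith
  obtain ⟨R, hR⟩ := isBounded_iff_forall_norm_le.1 hUbdd.closure
  have hxR : ∀ n, ‖x n‖ ≤ R := fun n => hR _ (hbd n).1.1
  have hx'R : ∀ n, ‖x' n‖ ≤ R + 1 := by
    intro n
    have h1 : ‖x' n‖ ≤ ‖x' n - x n‖ + ‖x n‖ := by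
      simpa using norm_add_le (x' n - x n) (x n)
    have := (hxx' n).le.trans (hone n)
    linarith [hxR n]
  have hBbdd : Bornology.IsBounded (𝓚 ∩ closedBall (0:E) (R+1)) :=
    (isBounded_closedBall).subset inter_subset_right
  obtain ⟨R', hR'⟩ := isBounded_iff_forall_norm_le.1
    (hGbdd _ inter_subset_left hBbdd)
  have hyR : ∀ n, ‖y n‖ ≤ R' := by
    intro n
    refine hR' _ (mem_biUnion ⟨hx'K n, ?_⟩ (hyG n))
    simpa [mem_closedBall_zero_iff] using hx'R n
  have hwR : ∀ n, ‖x n + h • (y n + ξ n)‖ ≤ R + h * (R' + 1) := by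
    intro n
    have h1 : ‖x n + h • (y n + ξ n)‖ ≤ ‖x n‖ + ‖h • (y n + ξ n)‖ := norm_add_le _ _
    have h2 : ‖h • (y n + ξ n)‖ = h * ‖y n + ξ n‖ := by
      rw [norm_smul, Real.norm_eq_abs, abs_of_pos hh]
    have h3 : ‖y n + ξ n‖ ≤ R' + 1 := by
      have := (norm_add_le (y n) (ξ n))
      have h4 := (hξ n).le.trans (hone n)
      linarith [hyR n]
    have h5 : h * ‖y n + ξ n‖ ≤ h * (R' + 1) := by nlinarith [hh.le]
    linarith [hxR n]
  -- compactness of J gives a convergent subsequence of x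
  obtain ⟨K, hKc, hKsub⟩ := IsCompactOperator.image_subset_compact_of_bounded
    (f := (J : E →ₗ[ℝ] E)) hJcomp (Metric.isBounded_closedBall (x := (0:E)) (r := R + h*(R'+1)))
  have hxK : ∀ n, x n ∈ K := by
    intro n
    refine hKsub ⟨x n + h • (y n + ξ n), ?_, keyJ n⟩
    simpa [mem_closedBall_zero_iff] using hwR n
  obtain ⟨xs, hxsK', φ, hφ, lim1⟩ := hKc.tendsto_subseq hxK
  -- xs in the relative boundary
  have hxsD : xs ∈ (closure U ∩ 𝓚) \ U :=
    hDcl.mem_of_tendsto lim1 (Filter.Eventually.of_forall fun k => hbd (φ k))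
  have hxs𝓚 : xs ∈ 𝓚 := hxsD.1.2
  -- auxiliary limits
  have htonφ : Filter.Tendsto (fun k : ℕ => 1/((φ k:ℝ)+1)) Filter.atTop (nhds 0) :=
    hton.comp hφ.tendsto_atTop
  have limξ : Filter.Tendsto (fun k => ξ (φ k)) Filter.atTop (nhds 0) :=
    squeeze_zero_norm (fun k => (hξ (φ k)).le) htonφ
  have limx' : Filter.Tendsto (fun k => x' (φ k)) Filter.atTop (nhds xs) := by
    have hd : Filter.Tendsto (fun k => x' (φ k) - x (φ k)) Filter.atTop (nhds 0) :=
      squeeze_zero_norm (fun k => (hxx' (φ k)).le) htonφ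
    have := lim1.add hd
    simpa using this
  -- infDist of y to G xs tends to 0
  have limdist : Filter.Tendsto (fun k => infDist (y (φ k)) (G xs)) Filter.atTop (nhds 0) := by
    rw [Metric.tendsto_atTop]
    intro ε hε
    obtain ⟨δ, hδ, hδ'⟩ := hGusc xs hxs𝓚 ε hε
    obtain ⟨N, hN⟩ := (Metric.tendsto_atTop.1 limx') δ hδ
    refine ⟨N, fun k hk => ?_⟩
    have h1 : ‖x' (φ k) - xs‖ < δ := by
      rw [← dist_eq_norm]; exact hN k hk
    have h2 := hδ' (x' (φ k)) (hx'K (φ k)) h1 (hyG (φ k))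
    have h3 : (0:ℝ) ≤ infDist (y (φ k)) (G xs) := infDist_nonneg
    rw [Real.dist_eq, sub_zero, abs_of_nonneg h3]
    exact h2
  -- approximate y by points of G xs
  have hz : ∀ k : ℕ, ∃ z ∈ G xs,
      dist (y (φ k)) z < infDist (y (φ k)) (G xs) + 1/((k:ℝ)+1) := by
    intro k
    exact (Metric.infDist_lt_iff (hGne xs hxs𝓚)).1
      (lt_add_of_pos_right _ (by positivity))
  choose z hzmem hzd using hz
  have limyz : Filter.Tendsto (fun k => y (φ k) - z k) Filter.atTop (nhds 0) := by
    have hb := limdist.add hton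
    rw [add_zero] at hb
    refine squeeze_zero_norm (fun k => ?_) hb
    rw [← dist_eq_norm]
    exact (hzd k).le
  -- h • J (z k) converges to xs - J xs
  have l2 : Filter.Tendsto (fun k => J (x (φ k))) Filter.atTop (nhds (J xs)) :=
    (J.continuous.tendsto _).comp lim1
  have l3 : Filter.Tendsto (fun k => h • J (ξ (φ k))) Filter.atTop (nhds 0) := by
    have := ((J.continuous.tendsto 0).comp limξ).const_smul h
    simpa using this
  have l4 : Filter.Tendsto (fun k => h • J (y (φ k) - z k)) Filter.atTop (nhds 0) := by
    have := ((J.continuous.tendsto 0).comp limyz).const_smul h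
    simpa using this
  have hJz : Filter.Tendsto (fun k => h • J (z k)) Filter.atTop (nhds (xs - J xs)) := by
    have hcongr : ∀ k, x (φ k) - J (x (φ k)) - h • J (ξ (φ k)) - h • J (y (φ k) - z k)
        = h • J (z k) := by
      intro k
      rw [map_sub, smul_sub]
      nth_rewrite 1 [key (φ k)]
      abel
    have := ((lim1.sub l2).sub l3).sub l4
    simp only [sub_zero] at this
    exact this.congr hcongr
  have hJz' : Filter.Tendsto (fun k => J (z k)) Filter.atTop
      (nhds (h⁻¹ • (xs - J xs))) := by
    have := hJz.const_smul h⁻¹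
    simpa [smul_smul, inv_mul_cancel₀ hh.ne'] using this
  -- J '' (G xs) is closed
  have hScl : IsClosed (J '' (G xs)) := by
    apply isClosed_of_weak_compact
    have hc := (hGweakcpt xs hxs𝓚).image (WeakSpace.map J).continuous
    rw [Set.image_image] at hc
    rw [Set.image_image]
    exact hc
  have hvmem : h⁻¹ • (xs - J xs) ∈ J '' (G xs) :=
    hScl.mem_of_tendsto hJz' (Filter.Eventually.of_forall fun k => ⟨z k, hzmem k, rfl⟩)
  obtain ⟨ys, hys, hvy⟩ := hvmem
  -- conclude: xs = J (xs + h • ys)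
  have heqJ : xs = J (xs + h • ys) := by
    rw [map_add, map_smul, hvy, smul_smul, mul_inv_cancel₀ hh.ne', one_smul]
    abel
  obtain ⟨hmem, heqA⟩ := hJ1 (xs + h • ys)
  have hxsdom : xs ∈ A.domain := by rw [heqJ]; exact hmem
  have hsub : (⟨J (xs + h • ys), hmem⟩ : A.domain) = ⟨xs, hxsdom⟩ :=
    Subtype.ext heqJ.symm
  rw [hsub, ← heqJ] at heqA
  -- heqA : xs - h • A ⟨xs, hxsdom⟩ = xs + h • ys
  have hAy : A ⟨xs, hxsdom⟩ + ys = 0 := by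
    have h1 : -(h • A ⟨xs, hxsdom⟩) = h • ys := by
      have := congrArg (fun t => t - xs) heqA
      simpa [sub_sub_eq_add_sub] using this
    have h2 : h • (A ⟨xs, hxsdom⟩ + ys) = h • (0:E) := by
      rw [smul_add, smul_zero]
      have : h • A ⟨xs, hxsdom⟩ = -(h • ys) := by
        rw [← h1, neg_neg]
      rw [this]
      abel
    exact smul_right_injective E hh.ne' h2
  exact hne0 xs hxsdom hxsD ys hys hAy
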